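/- Let C > 0 and assume ν̄(x) ~ C x^{−2} as x → ∞ (i.e. x² ν̄(x) → C). Then lim_{y→0⁺} (y log(1/y))^{−1} ∫_0^∞ (1 − e^{−yu}) ν̄(u) du = C. -/

import Mathlib

open MeasureTheory Filter

private lemma aux_one_sub_exp_neg_le (x : ℝ) : 1 - Real.exp (-x) ≤ x := by
  have := Real.add_one_le_exp (-x)
  linarith

private lemma aux_one_sub_exp_neg_nonneg (x : ℝ) (hx : 0 ≤ x) : 0 ≤ 1 - Real.exp (-x) := by
  have : Real.exp (-x) ≤ 1 := Real.exp_le_one_iff.mpr (by linarith)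
  linarith

private lemma aux_one_sub_exp_le_one (x : ℝ) : 1 - Real.exp (-x) ≤ 1 := by
  have := Real.exp_pos (-x); linarith

/-- integrability of `(1 - e^{-yu})/u²` on `(A, ∞)` -/
private lemma aux_integrableOn_J (y A : ℝ) (hy : 0 ≤ y) (hA : 0 < A) :
    IntegrableOn (fun u : ℝ => (1 - Real.exp (-(y*u))) / u ^ 2) (Set.Ioi A) := by
  have hmeas : Measurable (fun u : ℝ => (1 - Real.exp (-(y*u))) / u ^ 2) := by
    exact (measurable_const.sub ((measurable_id.const_mul y).neg.exp)).div
      (measurable_id.pow_const 2)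
  refine Integrable.mono' (g := fun u : ℝ => u ^ (-2 : ℝ))
    (integrableOn_Ioi_rpow_of_lt (by norm_num) hA) hmeas.aestronglyMeasurable ?_
  rw [ae_restrict_iff' measurableSet_Ioi]
  refine Filter.Eventually.of_forall (fun u hu => ?_)
  have hu0 : 0 < u := hA.trans hu
  have h2 : u ^ (-2 : ℝ) = (u ^ 2)⁻¹ := by
    rw [Real.rpow_neg hu0.le, ← Real.rpow_natCast u 2]
    norm_num
  show ‖(1 - Real.exp (-(y * u))) / u ^ 2‖ ≤ u ^ (-2 : ℝ)
  have hsq : 0 < u ^ 2 := by positivity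
  have hb : |1 - Real.exp (-(y * u))| ≤ 1 := by
    rw [abs_le]
    have h0 : 0 ≤ 1 - Real.exp (-(y*u)) :=
      aux_one_sub_exp_neg_nonneg _ (mul_nonneg hy hu0.le)
    exact ⟨by linarith, aux_one_sub_exp_le_one (y*u)⟩
  rw [h2, norm_div, Real.norm_eq_abs, Real.norm_eq_abs, abs_of_pos hsq, ← one_div]
  gcongr

/-- the key estimate for `J(y) = ∫_A^∞ (1-e^{-yu})/u² du`. -/
private lemma aux_J_est (A y : ℝ) (hA : 1 ≤ A) (hy : 0 < y) (hR : A < 1 / y) :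
    |(∫ u in Set.Ioi A, (1 - Real.exp (-(y*u))) / u ^ 2) - y * Real.log (1/y)|
      ≤ (2 + Real.log A) * y := by
  have hA0 : (0:ℝ) < A := lt_of_lt_of_le one_pos hA
  set R : ℝ := 1 / y with hRdef
  have hR0 : 0 < R := by positivity
  have hintJ := aux_integrableOn_J y A hy.le hA0
  have hintR := aux_integrableOn_J y R hy.le hR0
  have hint1 : IntegrableOn (fun u : ℝ => (1 - Real.exp (-(y*u))) / u ^ 2) (Set.Ioc A R) :=
    hintJ.mono_set Set.Ioc_subset_Ioi_self
  have hsplit : (∫ u in Set.Ioi A, (1 - Real.exp (-(y*u))) / u ^ 2)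
      = (∫ u in Set.Ioc A R, (1 - Real.exp (-(y*u))) / u ^ 2)
        + ∫ u in Set.Ioi R, (1 - Real.exp (-(y*u))) / u ^ 2 := by
    rw [← setIntegral_union Set.Ioc_disjoint_Ioi_same measurableSet_Ioi hint1 hintR,
      Set.Ioc_union_Ioi_eq_Ioi hR.le]
  have htail1 : (0:ℝ) ≤ ∫ u in Set.Ioi R, (1 - Real.exp (-(y*u))) / u ^ 2 :=
    setIntegral_nonneg measurableSet_Ioi fun u hu => div_nonneg
      (aux_one_sub_exp_neg_nonneg _ (mul_nonneg hy.le (hR0.trans hu).le)) (sq_nonneg u)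
  have htail2 : (∫ u in Set.Ioi R, (1 - Real.exp (-(y*u))) / u ^ 2) ≤ y := by
    have h1 : (∫ u in Set.Ioi R, (1 - Real.exp (-(y*u))) / u ^ 2)
        ≤ ∫ u in Set.Ioi R, u ^ (-2:ℝ) := by
      refine setIntegral_mono_on hintR (integrableOn_Ioi_rpow_of_lt (by norm_num) hR0)
        measurableSet_Ioi fun u hu => ?_
      have hu0 : 0 < u := hR0.trans hu
      have h2 : u ^ (-2 : ℝ) = (u ^ 2)⁻¹ := by
        rw [Real.rpow_neg hu0.le, ← Real.rpow_natCast u 2]; norm_num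
      rw [h2, ← one_div]
      gcongr
      · exact aux_one_sub_exp_le_one _
    have h2 : (∫ u in Set.Ioi R, u ^ (-2:ℝ)) = y := by
      rw [integral_Ioi_rpow_of_lt (by norm_num) hR0]
      norm_num
      rw [Real.rpow_neg hR0.le, Real.rpow_one, hRdef]
      field_simp
    linarith
  have hconst : IntegrableOn (fun u : ℝ => y * (1/u)) (Set.Ioc A R) := by
    have hcont : ContinuousOn (fun u : ℝ => y * (1/u)) (Set.Icc A R) :=
      continuousOn_const.mul (continuousOn_const.div continuousOn_id
        fun x hx => ne_of_gt (lt_of_lt_of_le hA0 hx.1))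
    exact (hcont.integrableOn_Icc).mono_set Set.Ioc_subset_Icc_self
  have hlog : (∫ u in Set.Ioc A R, y * (1/u)) = y * (Real.log (1/y) - Real.log A) := by
    rw [← intervalIntegral.integral_of_le hR.le, intervalIntegral.integral_const_mul,
      integral_one_div
        (by rw [Set.uIcc_of_le hR.le]; rintro ⟨h1, -⟩; linarith : (0:ℝ) ∉ Set.uIcc A R),
      Real.log_div (ne_of_gt hR0) (ne_of_gt hA0)]
  have hmid : |(∫ u in Set.Ioc A R, (1 - Real.exp (-(y*u))) / u ^ 2)
      - y * (Real.log (1/y) - Real.log A)| ≤ y := by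
    rw [← hlog, ← integral_sub hint1 hconst]
    have key : ∀ u ∈ Set.Ioc A R,
        ‖(1 - Real.exp (-(y*u))) / u ^ 2 - y * (1/u)‖ ≤ y^2 := by
      intro u hu
      have hu0 : 0 < u := hA0.trans hu.1
      have hyu0 : 0 ≤ y * u := mul_nonneg hy.le hu0.le
      have hyu1 : y * u ≤ 1 := by
        have h := mul_le_mul_of_nonneg_left hu.2 hy.le
        rwa [hRdef, mul_one_div, div_self (ne_of_gt hy)] at h
      have habs := Real.abs_exp_sub_one_sub_id_le
        (x := -(y*u)) (by rwa [abs_neg, abs_of_nonneg hyu0])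
      have heq : (1 - Real.exp (-(y*u))) / u ^ 2 - y * (1/u)
          = -(Real.exp (-(y*u)) - 1 - (-(y*u))) / u^2 := by
        field_simp
        ring
      rw [Real.norm_eq_abs, heq, abs_div, abs_neg, abs_of_pos (by positivity : (0:ℝ) < u^2)]
      have hle : |Real.exp (-(y*u)) - 1 - (-(y*u))| / u ^ 2 ≤ (y*u)^2 / u^2 := by
        gcongr
        calc |Real.exp (-(y*u)) - 1 - (-(y*u))| ≤ (-(y*u))^2 := habs
          _ = (y*u)^2 := by ring
      calc |Real.exp (-(y*u)) - 1 - (-(y*u))| / u ^ 2 ≤ (y*u)^2 / u^2 := hle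
        _ = y^2 := by field_simp
    have hb := norm_setIntegral_le_of_norm_le_const (μ := volume)
      (by rw [Real.volume_Ioc]; exact ENNReal.ofReal_lt_top) key
    rw [measureReal_def, Real.volume_Ioc, ENNReal.toReal_ofReal (by linarith : (0:ℝ) ≤ R - A)] at hb
    rw [Real.norm_eq_abs] at hb
    calc |∫ u in Set.Ioc A R, ((1 - Real.exp (-(y*u))) / u ^ 2 - y * (1/u))|
        ≤ y^2 * (R - A) := hb
      _ ≤ y^2 * R := by nlinarith [sq_nonneg y]
      _ = y := by rw [hRdef]; field_simp [pow_two]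
  have hlogA : 0 ≤ Real.log A := Real.log_nonneg hA
  rw [hsplit]
  have h1 := abs_le.mp hmid
  rw [abs_le]
  constructor <;> nlinarith [mul_nonneg hy.le hlogA]

set_option maxHeartbeats 1000000 in
theorem tail_integral_asymptotic_index_two
    (ν : Measure ℝ) (hν0 : ν (Set.Iic 0) = 0)
    (hint : Integrable (fun l : ℝ => l) ν)
    (hmpos : 0 < ∫ l, l ∂ν)
    (C : ℝ) (hC : 0 < C)
    (htail : Tendsto (fun x : ℝ => x ^ 2 * (ν (Set.Ioi x)).toReal)
      atTop (nhds C)) :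
    Tendsto
      (fun y : ℝ =>
        (y * Real.log (1 / y))⁻¹ * ∫ u in Set.Ioi (0 : ℝ),
          (1 - Real.exp (-(y * u))) * (ν (Set.Ioi u)).toReal)
      (nhdsWithin 0 (Set.Ioi 0)) (nhds C) := by
  set N : ℝ → ℝ := fun u => (ν (Set.Ioi u)).toReal with hNdef
  have hNmeasE : Measurable (fun u : ℝ => ν (Set.Ioi u)) :=
    Antitone.measurable (fun a b hab => measure_mono (Set.Ioi_subset_Ioi hab))
  have hNmeas : Measurable N := hNmeasE.ennreal_toReal
  have hNnonneg : ∀ u, 0 ≤ N u := fun u => ENNReal.toReal_nonneg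
  -- finiteness of the tail integral via the layer-cake formula
  have hae : (fun _ : ℝ => (0:ℝ)) ≤ᵐ[ν] (fun l : ℝ => l) := by
    refine (ae_iff.mpr (measure_mono_null ?_ hν0))
    intro l hl
    simp only [Set.mem_setOf_eq, not_le] at hl
    exact Set.mem_Iic.mpr hl.le
  have hlayer := lintegral_eq_lintegral_meas_lt ν hae aemeasurable_id
  have hfin : (∫⁻ l, ENNReal.ofReal l ∂ν) < ⊤ := by
    calc (∫⁻ l, ENNReal.ofReal l ∂ν) ≤ ∫⁻ l, (‖l‖₊ : ENNReal) ∂ν :=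
        lintegral_mono fun l => Real.ofReal_le_enorm l
      _ < ⊤ := hint.2
  rw [hlayer] at hfin
  have hlint : (∫⁻ t in Set.Ioi (0:ℝ), ν (Set.Ioi t)) ≠ ⊤ := by
    refine ne_of_lt (lt_of_le_of_lt (le_of_eq ?_) hfin)
    rfl
  have hNint : IntegrableOn N (Set.Ioi (0:ℝ)) :=
    integrable_toReal_of_lintegral_ne_top hNmeasE.aemeasurable hlint
  have hIint : ∀ y : ℝ, 0 ≤ y →
      IntegrableOn (fun u => (1 - Real.exp (-(y*u))) * N u) (Set.Ioi (0:ℝ)) := by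
    intro y hy
    refine Integrable.mono' hNint
      ((measurable_const.sub ((measurable_id.const_mul y).neg.exp)).mul
        hNmeas).aestronglyMeasurable ?_
    rw [ae_restrict_iff' measurableSet_Ioi]
    refine Filter.Eventually.of_forall fun u hu => ?_
    have hu0 : (0:ℝ) < u := hu
    have h0 := aux_one_sub_exp_neg_nonneg (y*u) (mul_nonneg hy hu0.le)
    have h1 := aux_one_sub_exp_le_one (y*u)
    rw [Real.norm_eq_abs, abs_of_nonneg (mul_nonneg h0 (hNnonneg u))]
    nlinarith [hNnonneg u]
  obtain ⟨m₀, hm₀def⟩ : ∃ m₀ : ℝ, (∫ u in Set.Ioi (0:ℝ), N u) = m₀ := ⟨_, rfl⟩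
  have hm₀ : 0 ≤ m₀ := hm₀def ▸ setIntegral_nonneg measurableSet_Ioi fun u _ => hNnonneg u
  rw [Metric.tendsto_nhds]
  intro ε hε
  obtain ⟨δ, hδ0, hδε, hδC⟩ : ∃ δ : ℝ, 0 < δ ∧ δ ≤ ε/2 ∧ δ ≤ C/2 :=
    ⟨min (ε/2) (C/2), lt_min (by linarith) (by linarith), min_le_left _ _, min_le_right _ _⟩
  obtain ⟨A, hA1, hAtail⟩ : ∃ A : ℝ, 1 ≤ A ∧ ∀ u : ℝ, A ≤ u → |u^2 * N u - C| ≤ δ := by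
    obtain ⟨A₀, hA₀⟩ := Filter.eventually_atTop.mp (Metric.tendsto_nhds.mp htail δ hδ0)
    exact ⟨max A₀ 1, le_max_right _ _, fun u hu => le_of_lt
      (by rw [← Real.dist_eq]; exact hA₀ u ((le_max_left _ _).trans hu))⟩
  have hA0 : (0:ℝ) < A := lt_of_lt_of_le one_pos hA1
  have hlogA : 0 ≤ Real.log A := Real.log_nonneg hA1
  have hBb : (0:ℝ) ≤ 2 + Real.log A := by linarith
  have hLtop : Tendsto (fun y : ℝ => Real.log (1/y)) (nhdsWithin 0 (Set.Ioi 0)) atTop := by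
    have h2 : Tendsto (fun x : ℝ => -Real.log x) (nhdsWithin 0 (Set.Ioi 0)) atTop :=
      tendsto_neg_atBot_atTop.comp Real.tendsto_log_nhdsGT_zero
    exact h2.congr fun x => by rw [one_div, Real.log_inv]
  filter_upwards [self_mem_nhdsWithin,
    Ioo_mem_nhdsGT_of_mem (Set.left_mem_Ico.mpr (by positivity : (0:ℝ) < A⁻¹)),
    hLtop.eventually (eventually_ge_atTop (2 + Real.log A)),
    hLtop.eventually (eventually_ge_atTop
      (2*((A * m₀ + (C+δ)*(2+Real.log A) + C*(2+Real.log A))+1)/ε))]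
    with y hy hyA' hLB hLD
  have hy0 : (0:ℝ) < y := hy
  have hL0 : (0:ℝ) < Real.log (1/y) := lt_of_lt_of_le (by linarith) hLB
  have hyL : (0:ℝ) < y * Real.log (1/y) := mul_pos hy0 hL0
  have hyA : A < 1/y := by
    have h1 : y * A < 1 := by
      have h2 : y < 1/A := by
        have h3 := hyA'.2
        rwa [inv_eq_one_div] at h3
      have h4 := (lt_div_iff₀ hA0).mp h2
      linarith
    rw [lt_div_iff₀ hy0]
    nlinarith
  have hLD' : 2*((A * m₀ + (C+δ)*(2+Real.log A) + C*(2+Real.log A))+1)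
      ≤ ε * Real.log (1/y) := by
    rw [div_le_iff₀ hε] at hLD
    nlinarith
  -- J estimate
  have hJ := aux_J_est A y hA1 hy0 hyA
  have hJu : (∫ u in Set.Ioi A, (1 - Real.exp (-(y*u))) / u ^ 2)
      ≤ y * Real.log (1/y) + (2 + Real.log A) * y := by
    have := abs_le.mp hJ; linarith [this.2]
  have hJl : y * Real.log (1/y) - (2 + Real.log A) * y
      ≤ (∫ u in Set.Ioi A, (1 - Real.exp (-(y*u))) / u ^ 2) := by
    have := abs_le.mp hJ; linarith [this.1]
  -- splitting the integral
  have hint2 : IntegrableOn (fun u => (1 - Real.exp (-(y*u))) * N u) (Set.Ioi A) :=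
    (hIint y hy0.le).mono_set (Set.Ioi_subset_Ioi hA0.le)
  have hint1 : IntegrableOn (fun u => (1 - Real.exp (-(y*u))) * N u) (Set.Ioc 0 A) :=
    (hIint y hy0.le).mono_set Set.Ioc_subset_Ioi_self
  have hintJ := aux_integrableOn_J y A hy0.le hA0
  have hsplit : (∫ u in Set.Ioi (0:ℝ), (1 - Real.exp (-(y*u))) * N u)
      = (∫ u in Set.Ioc (0:ℝ) A, (1 - Real.exp (-(y*u))) * N u)
        + (∫ u in Set.Ioi A, (1 - Real.exp (-(y*u))) * N u) := by
    rw [← setIntegral_union Set.Ioc_disjoint_Ioi_same measurableSet_Ioi hint1 hint2,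
      Set.Ioc_union_Ioi_eq_Ioi hA0.le]
  -- bound on the inner part
  have hI1 : (∫ u in Set.Ioc (0:ℝ) A, (1 - Real.exp (-(y*u))) * N u) ≤ y * A * m₀ := by
    have step1 : (∫ u in Set.Ioc (0:ℝ) A, (1 - Real.exp (-(y*u))) * N u)
        ≤ ∫ u in Set.Ioc (0:ℝ) A, (y * A) * N u := by
      refine setIntegral_mono_on hint1
        ((hNint.mono_set Set.Ioc_subset_Ioi_self).const_mul _) measurableSet_Ioc
        fun u hu => ?_
      have e1 : 1 - Real.exp (-(y*u)) ≤ y * A :=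
        le_trans (aux_one_sub_exp_neg_le (y*u)) (mul_le_mul_of_nonneg_left hu.2 hy0.le)
      exact mul_le_mul_of_nonneg_right e1 (hNnonneg u)
    have step2 : (∫ u in Set.Ioc (0:ℝ) A, (y*A) * N u)
        = (y*A) * ∫ u in Set.Ioc (0:ℝ) A, N u := integral_const_mul _ _
    have step3 : (∫ u in Set.Ioc (0:ℝ) A, N u) ≤ m₀ := by
      rw [← hm₀def]
      exact setIntegral_mono_set hNint (Filter.Eventually.of_forall fun u => hNnonneg u)
        (HasSubset.Subset.eventuallyLE Set.Ioc_subset_Ioi_self)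
    nlinarith [mul_le_mul_of_nonneg_left step3 (by positivity : (0:ℝ) ≤ y*A)]
  have hI1pos : (0:ℝ) ≤ ∫ u in Set.Ioc (0:ℝ) A, (1 - Real.exp (-(y*u))) * N u :=
    setIntegral_nonneg measurableSet_Ioc fun u hu =>
      mul_nonneg (aux_one_sub_exp_neg_nonneg _ (mul_nonneg hy0.le hu.1.le)) (hNnonneg u)
  -- bounds on the outer part
  have hI2u : (∫ u in Set.Ioi A, (1 - Real.exp (-(y*u))) * N u)
      ≤ (C + δ) * (∫ u in Set.Ioi A, (1 - Real.exp (-(y*u))) / u ^ 2) := by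
    have step : (∫ u in Set.Ioi A, (1 - Real.exp (-(y*u))) * N u)
        ≤ ∫ u in Set.Ioi A, (C + δ) * ((1 - Real.exp (-(y*u))) / u ^ 2) := by
      refine setIntegral_mono_on hint2 (hintJ.const_mul _) measurableSet_Ioi fun u hu => ?_
      have hu0 : (0:ℝ) < u := hA0.trans hu
      have htl := abs_le.mp (hAtail u (le_of_lt hu))
      have hNle : N u ≤ (C + δ) / u^2 := by
        rw [le_div_iff₀ (by positivity)]
        nlinarith [htl.2]
      have h0 := aux_one_sub_exp_neg_nonneg (y*u) (mul_nonneg hy0.le hu0.le)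
      calc (1 - Real.exp (-(y*u))) * N u
          ≤ (1 - Real.exp (-(y*u))) * ((C+δ)/u^2) := mul_le_mul_of_nonneg_left hNle h0
        _ = (C+δ) * ((1 - Real.exp (-(y*u))) / u^2) := by ring
    rwa [integral_const_mul] at step
  have hI2l : (C - δ) * (∫ u in Set.Ioi A, (1 - Real.exp (-(y*u))) / u ^ 2)
      ≤ (∫ u in Set.Ioi A, (1 - Real.exp (-(y*u))) * N u) := by
    have step : (∫ u in Set.Ioi A, (C - δ) * ((1 - Real.exp (-(y*u))) / u ^ 2))
        ≤ ∫ u in Set.Ioi A, (1 - Real.exp (-(y*u))) * N u := by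
      refine setIntegral_mono_on (hintJ.const_mul _) hint2 measurableSet_Ioi fun u hu => ?_
      have hu0 : (0:ℝ) < u := hA0.trans hu
      have htl := abs_le.mp (hAtail u (le_of_lt hu))
      have hNge : (C - δ) / u^2 ≤ N u := by
        rw [div_le_iff₀ (by positivity)]
        nlinarith [htl.1]
      have h0 := aux_one_sub_exp_neg_nonneg (y*u) (mul_nonneg hy0.le hu0.le)
      calc (C-δ) * ((1 - Real.exp (-(y*u))) / u^2)
          = (1 - Real.exp (-(y*u))) * ((C-δ)/u^2) := by ring
        _ ≤ (1 - Real.exp (-(y*u))) * N u := mul_le_mul_of_nonneg_left hNge h0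
    rwa [integral_const_mul] at step
  -- scalar inequalities
  have hCδ : (0:ℝ) ≤ C - δ := by linarith
  have key1 : A*m₀ + (C+δ)*(Real.log (1/y) + (2+Real.log A)) < (C+ε)*Real.log (1/y) := by
    nlinarith [mul_le_mul_of_nonneg_right hδε hL0.le, hLD',
      mul_nonneg hC.le hBb, mul_nonneg (by linarith : (0:ℝ) ≤ C+δ) hBb,
      mul_nonneg (mul_nonneg hA0.le hm₀) hL0.le]
  have key2 : (C-ε)*Real.log (1/y) < (C-δ)*(Real.log (1/y) - (2+Real.log A)) := by
    nlinarith [mul_le_mul_of_nonneg_right hδε hL0.le, hLD',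
      mul_le_mul_of_nonneg_right (by linarith : C - δ ≤ C) hBb,
      mul_nonneg (mul_nonneg hA0.le hm₀) hL0.le,
      mul_nonneg (by linarith : (0:ℝ) ≤ C+δ) hBb,
      mul_nonneg hA0.le hm₀]
  -- combine
  have hup : (∫ u in Set.Ioi (0:ℝ), (1 - Real.exp (-(y*u))) * N u)
      < (C+ε)*(y*Real.log (1/y)) := by
    nlinarith [hsplit, hI1, hI2u,
      mul_le_mul_of_nonneg_left hJu (by linarith : (0:ℝ) ≤ C+δ),
      mul_lt_mul_of_pos_left key1 hy0]
  have hlow : (C-ε)*(y*Real.log (1/y))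
      < (∫ u in Set.Ioi (0:ℝ), (1 - Real.exp (-(y*u))) * N u) := by
    nlinarith [hsplit, hI1pos, hI2l,
      mul_le_mul_of_nonneg_left hJl hCδ,
      mul_lt_mul_of_pos_left key2 hy0]
  have hquot1 : (y * Real.log (1/y))⁻¹
      * (∫ u in Set.Ioi (0:ℝ), (1 - Real.exp (-(y*u))) * N u) < C + ε := by
    rw [inv_mul_eq_div, div_lt_iff₀ hyL]
    exact hup
  have hquot2 : C - ε < (y * Real.log (1/y))⁻¹
      * (∫ u in Set.Ioi (0:ℝ), (1 - Real.exp (-(y*u))) * N u) := by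
    rw [inv_mul_eq_div, lt_div_iff₀ hyL]
    exact hlow
  rw [Real.dist_eq, abs_sub_lt_iff]
  constructor <;> [linarith; linarith]
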